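/- The clustering method VL^2 at scale δ = 1 is not functorial for arbitrary nonexpansive maps: there exist finite metric spaces (X, d_X), (Y, d_Y) and a nonexpansive map f : X → Y such that VL^2_1(X) does not refine f⁻¹(VL^2_1(Y)), i.e., some maximal 2-vertex-connected subset of X (with respect to the 1-threshold graph of X) is not contained in f⁻¹(B) for any maximal 2-vertex-connected subset B of Y. -/

import Mathlib

/-- `d` is a metric (distance function) on `X`. -/
def IsMetricOn {X : Type*} (d : X → X → ℝ) : Prop :=
  (∀ x, d x x = 0) ∧ (∀ x y, d x y = d y x) ∧
  (∀ x y z, d x z ≤ d x y + d y z) ∧ (∀ x y, d x y = 0 → x = y)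

/-- `A` is `k`-vertex-connected w.r.t. `G`: the induced subgraph `G[A]` is connected,
and removing any fewer than `k` vertices from `A` leaves it connected or empty. -/
def IsKVertexConnected {X : Type*} (G : SimpleGraph X) (k : ℕ) (A : Set X) : Prop :=
  (G.induce A).Connected ∧
    ∀ S : Set X, S ⊆ A → S.ncard < k →
      ((G.induce (A \ S)).Connected ∨ A \ S = ∅)

/-- A maximal `k`-vertex-connected subset. -/
def IsMaxKVertexConnected {X : Type*} (G : SimpleGraph X) (k : ℕ) (A : Set X) : Prop :=
  IsKVertexConnected G k A ∧
    ∀ B : Set X, IsKVertexConnected G k B → A ⊆ B → A = B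

/-- ℕ-valued distance on the 4-cycle: opposite vertices at distance 2, adjacent at 1. -/
def dXN (a b : Fin 4) : ℕ := if a = b then 0 else if a.val % 2 = b.val % 2 then 2 else 1

/-- ℕ-valued distance on the 3-path: `|a - b|`. -/
def dYN (a b : Fin 3) : ℕ := max a.val b.val - min a.val b.val

/-- The collapsing map from the 4-cycle to the 3-path. -/
def fc : Fin 4 → Fin 3 := ![0, 1, 2, 1]

/-- The 1-threshold graph of `dXN`: a 4-cycle. -/
def cyc : SimpleGraph (Fin 4) where
  Adj a b := a ≠ b ∧ dXN a b ≤ 1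
  symm := ⟨by decide⟩
  loopless := ⟨by decide⟩

/-- The 1-threshold graph of `dYN`: a path on 3 vertices. -/
def pathG : SimpleGraph (Fin 3) where
  Adj a b := a ≠ b ∧ dYN a b ≤ 1
  symm := ⟨by decide⟩
  loopless := ⟨by decide⟩

instance : DecidableRel cyc.Adj := fun a b => inferInstanceAs (Decidable (a ≠ b ∧ dXN a b ≤ 1))
instance : DecidableRel pathG.Adj := fun a b => inferInstanceAs (Decidable (a ≠ b ∧ dYN a b ≤ 1))

lemma cyc_univ_conn : (cyc.induce (Set.univ : Set (Fin 4))).Connected := by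
  rw [SimpleGraph.connected_iff]
  exact ⟨by decide, ⟨⟨0, trivial⟩⟩⟩

lemma cyc_del_conn (a : Fin 4) : (cyc.induce (Set.univ \ {a})).Connected := by
  rw [SimpleGraph.connected_iff]
  fin_cases a
  · exact ⟨by decide, ⟨⟨1, by simp⟩⟩⟩
  · exact ⟨by decide, ⟨⟨0, by simp⟩⟩⟩
  · exact ⟨by decide, ⟨⟨0, by simp⟩⟩⟩
  · exact ⟨by decide, ⟨⟨0, by simp⟩⟩⟩

theorem VL_not_functorial_on_Met :
    ∃ (X Y : Type) (_ : Fintype X) (_ : Fintype Y) (_ : Nonempty X) (_ : Nonempty Y)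
      (dX : X → X → ℝ) (dY : Y → Y → ℝ)
      (GX : SimpleGraph X) (GY : SimpleGraph Y) (f : X → Y),
      IsMetricOn dX ∧ IsMetricOn dY ∧
      (∀ a b : X, GX.Adj a b ↔ a ≠ b ∧ dX a b ≤ 1) ∧
      (∀ a b : Y, GY.Adj a b ↔ a ≠ b ∧ dY a b ≤ 1) ∧
      (∀ a b : X, dY (f a) (f b) ≤ dX a b) ∧
      ∃ A : Set X, IsMaxKVertexConnected GX 2 A ∧
        ∀ B : Set Y, IsMaxKVertexConnected GY 2 B → ¬ A ⊆ f ⁻¹' B := by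
  refine ⟨Fin 4, Fin 3, inferInstance, inferInstance, inferInstance, inferInstance,
    fun a b => (dXN a b : ℝ), fun a b => (dYN a b : ℝ), cyc, pathG, fc, ?_, ?_, ?_, ?_, ?_, ?_⟩
  · refine ⟨fun x => by simp [dXN], fun x y => ?_, fun x y z => ?_, fun x y h => ?_⟩
    · show (dXN x y : ℝ) = (dXN y x : ℝ)
      congr 1; revert x y; decide
    · show (dXN x z : ℝ) ≤ (dXN x y : ℝ) + (dXN y z : ℝ)
      exact_mod_cast (show dXN x z ≤ dXN x y + dXN y z by revert x y z; decide)
    · have h' : dXN x y = 0 := by exact_mod_cast (show (dXN x y : ℝ) = 0 from h)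
      exact (show ∀ x y, dXN x y = 0 → x = y by decide) x y h'
  · refine ⟨fun x => by simp [dYN], fun x y => ?_, fun x y z => ?_, fun x y h => ?_⟩
    · show (dYN x y : ℝ) = (dYN y x : ℝ)
      congr 1; revert x y; decide
    · show (dYN x z : ℝ) ≤ (dYN x y : ℝ) + (dYN y z : ℝ)
      exact_mod_cast (show dYN x z ≤ dYN x y + dYN y z by revert x y z; decide)
    · have h' : dYN x y = 0 := by exact_mod_cast (show (dYN x y : ℝ) = 0 from h)
      exact (show ∀ x y, dYN x y = 0 → x = y by decide) x y h'
  · intro a b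
    show (a ≠ b ∧ dXN a b ≤ 1) ↔ a ≠ b ∧ (dXN a b : ℝ) ≤ 1
    constructor
    · rintro ⟨h1, h2⟩; exact ⟨h1, by exact_mod_cast h2⟩
    · rintro ⟨h1, h2⟩; exact ⟨h1, by exact_mod_cast h2⟩
  · intro a b
    show (a ≠ b ∧ dYN a b ≤ 1) ↔ a ≠ b ∧ (dYN a b : ℝ) ≤ 1
    constructor
    · rintro ⟨h1, h2⟩; exact ⟨h1, by exact_mod_cast h2⟩
    · rintro ⟨h1, h2⟩; exact ⟨h1, by exact_mod_cast h2⟩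
  · intro a b
    show (dYN (fc a) (fc b) : ℝ) ≤ (dXN a b : ℝ)
    exact_mod_cast (show dYN (fc a) (fc b) ≤ dXN a b by revert a b; decide)
  · refine ⟨Set.univ, ⟨⟨cyc_univ_conn, ?_⟩, fun B _ hB => (Set.univ_subset_iff.mp hB).symm⟩, ?_⟩
    · intro S _ hS
      rcases (Set.ncard_le_one_iff_eq (Set.toFinite S)).mp (Nat.lt_succ_iff.mp hS) with h | ⟨a, h⟩
      · subst h; rw [Set.diff_empty]; exact Or.inl cyc_univ_conn
      · subst h; exact Or.inl (cyc_del_conn a)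
    · intro B hB hsub
      have hBuniv : B = Set.univ := by
        apply Set.eq_univ_of_forall
        intro y
        fin_cases y
        · exact hsub (show (0 : Fin 4) ∈ Set.univ from trivial)
        · exact hsub (show (1 : Fin 4) ∈ Set.univ from trivial)
        · exact hsub (show (2 : Fin 4) ∈ Set.univ from trivial)
      subst hBuniv
      rcases hB.1.2 {1} (Set.subset_univ _) (by simp) with h | h
      · exact (by decide : ¬ (pathG.induce (Set.univ \ {(1:Fin 3)})).Preconnected) h.preconnected
      · have h0 : (0:Fin 3) ∈ Set.univ \ ({1} : Set (Fin 3)) := by simp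
        rw [h] at h0
        exact h0
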